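/- Let d ≥ 1, q a prime power with d > 1 and q > 2. Then the set of matrices in GL_d(𝔽_q) having -1 as an eigenvalue has cardinality strictly less than half of |GL_d(𝔽_q)|. -/

import Mathlib

open Matrix

private lemma aux8_exists_lequiv {F V : Type*} [Field F] [AddCommGroup V] [Module F V]
    {x y : V} (hx : x ≠ 0) (hy : y ≠ 0) : ∃ e : V ≃ₗ[F] V, e x = y := by
  classical
  have lix := LinearIndepOn.singleton (R := F) (v := id) hx
  have liy := LinearIndepOn.singleton (R := F) (v := id) hy
  let bx := Module.Basis.extend lix
  let by' := Module.Basis.extend liy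
  have hxs : x ∈ lix.extend (Set.subset_univ _) := lix.subset_extend _ rfl
  have hys : y ∈ liy.extend (Set.subset_univ _) := liy.subset_extend _ rfl
  let e0 := bx.indexEquiv by'
  let e := e0.trans (Equiv.swap (e0 ⟨x, hxs⟩) ⟨y, hys⟩)
  refine ⟨bx.equiv by' e, ?_⟩
  have h1 : bx ⟨x, hxs⟩ = x := Module.Basis.extend_apply_self _ _
  have h2 : by' ⟨y, hys⟩ = y := Module.Basis.extend_apply_self _ _
  calc bx.equiv by' e x = bx.equiv by' e (bx ⟨x, hxs⟩) := by rw [h1]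
    _ = by' (e ⟨x, hxs⟩) := Module.Basis.equiv_apply _ _ _ _
    _ = y := by simp [e, Equiv.swap_apply_left, h2]

private lemma aux8_exists_gl {F : Type*} [Field F] {d : ℕ} {w w' : Fin d → F}
    (hw : w ≠ 0) (hw' : w' ≠ 0) :
    ∃ C : GL (Fin d) F, Matrix.vecMul w (C : Matrix (Fin d) (Fin d) F) = w' := by
  classical
  obtain ⟨e, he⟩ := aux8_exists_lequiv (F := F) hw hw'
  let M := LinearMap.toMatrix' (e : (Fin d → F) →ₗ[F] (Fin d → F))
  let M' := LinearMap.toMatrix' (e.symm : (Fin d → F) →ₗ[F] (Fin d → F))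
  have hMM' : M * M' = 1 := by
    rw [← LinearMap.toMatrix'_comp, ← LinearMap.toMatrix'_id (R := F) (n := Fin d)]
    congr 1; ext v : 1; simp
  have hM'M : M' * M = 1 := by
    rw [← LinearMap.toMatrix'_comp, ← LinearMap.toMatrix'_id (R := F) (n := Fin d)]
    congr 1; ext v : 1; simp
  refine ⟨⟨Mᵀ, M'ᵀ, ?_, ?_⟩, ?_⟩
  · rw [← transpose_mul, hM'M, transpose_one]
  · rw [← transpose_mul, hMM', transpose_one]
  · show Matrix.vecMul w Mᵀ = w'
    rw [Matrix.vecMul_transpose]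
    show Matrix.toLin' M w = w'
    simp [M, he]

private lemma aux8_vecMul_ne_zero {F : Type*} [Field F] {d : ℕ} {v : Fin d → F} (hv : v ≠ 0)
    (A : GL (Fin d) F) : Matrix.vecMul v (A : Matrix (Fin d) (Fin d) F) ≠ 0 := by
  intro h
  apply hv
  have : Matrix.vecMul (Matrix.vecMul v (A : Matrix (Fin d) (Fin d) F))
      ((A⁻¹ : GL (Fin d) F) : Matrix (Fin d) (Fin d) F) = 0 := by rw [h, Matrix.zero_vecMul]
  rwa [Matrix.vecMul_vecMul, ← Units.val_mul, mul_inv_cancel, Units.val_one,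
    Matrix.vecMul_one] at this

private lemma aux8_fiber_card_eq {F : Type*} [Field F] [Fintype F] {d : ℕ} {v w w' : Fin d → F}
    (hw : w ≠ 0) (hw' : w' ≠ 0) :
    Nat.card {A : GL (Fin d) F // Matrix.vecMul v (A : Matrix (Fin d) (Fin d) F) = w}
      = Nat.card {A : GL (Fin d) F // Matrix.vecMul v (A : Matrix (Fin d) (Fin d) F) = w'} := by
  obtain ⟨C, hC⟩ := aux8_exists_gl hw hw'
  refine Nat.card_congr ⟨fun p => ⟨p.1 * C, ?_⟩, fun p => ⟨p.1 * C⁻¹, ?_⟩, ?_, ?_⟩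
  · rw [Units.val_mul, ← Matrix.vecMul_vecMul, p.2, hC]
  · have : Matrix.vecMul w' ((C⁻¹ : GL (Fin d) F) : Matrix (Fin d) (Fin d) F) = w := by
      rw [← hC, Matrix.vecMul_vecMul, ← Units.val_mul, mul_inv_cancel, Units.val_one,
        Matrix.vecMul_one]
    rw [Units.val_mul, ← Matrix.vecMul_vecMul, p.2, this]
  · intro p; ext : 1; simp [mul_assoc]
  · intro p; ext : 1; simp [mul_assoc]

private lemma aux8_card_gl_eq {F : Type*} [Field F] [Fintype F] {d : ℕ} {v : Fin d → F}
    (hv : v ≠ 0) :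
    Nat.card (GL (Fin d) F) = Nat.card {w : Fin d → F // w ≠ 0} *
      Nat.card {A : GL (Fin d) F // Matrix.vecMul v (A : Matrix (Fin d) (Fin d) F) = -v} := by
  classical
  have e : GL (Fin d) F ≃ Σ w : {w : Fin d → F // w ≠ 0},
      {A : GL (Fin d) F // Matrix.vecMul v (A : Matrix (Fin d) (Fin d) F) = (w : Fin d → F)} := by
    refine ⟨fun A => ⟨⟨Matrix.vecMul v A, aux8_vecMul_ne_zero hv A⟩, A, rfl⟩,
      fun s => s.2.1, fun A => rfl, ?_⟩
    rintro ⟨⟨w, hw⟩, A, hA⟩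
    obtain rfl : w = Matrix.vecMul v (A : Matrix (Fin d) (Fin d) F) := hA.symm
    rfl
  rw [Nat.card_congr e, Nat.card_eq_fintype_card, Fintype.card_sigma]
  simp_rw [← Nat.card_eq_fintype_card]
  rw [Finset.sum_congr rfl (fun w _ => aux8_fiber_card_eq w.2 (neg_ne_zero.mpr hv))]
  rw [Finset.sum_const, smul_eq_mul, Nat.card_eq_fintype_card, Finset.card_univ,
    Nat.card_eq_fintype_card]

theorem stmt_8 {F : Type*} [Field F] [Fintype F] {d : ℕ} (hd : 1 < d)
    (hq : 2 < Fintype.card F) :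
    2 * Nat.card {A : GL (Fin d) F // ∃ v : Fin d → F, v ≠ 0 ∧
        Matrix.vecMul v (A : Matrix (Fin d) (Fin d) F) = -v} <
      Nat.card (GL (Fin d) F) := by
  classical
  set q := Fintype.card F with hqdef
  set N := Nat.card (GL (Fin d) F) with hN
  set K := Nat.card {w : Fin d → F // w ≠ 0} with hK
  set P := Nat.card {p : (Fin d → F) × GL (Fin d) F //
      p.1 ≠ 0 ∧ Matrix.vecMul p.1 (p.2 : Matrix (Fin d) (Fin d) F) = -p.1} with hP
  have i0 : Fin d := ⟨0, by omega⟩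
  have hone : (1 : Fin d → F) ≠ 0 := by
    intro h
    have := congrFun h i0
    simp at this
  -- P = N
  have hne : Nonempty {w : Fin d → F // w ≠ 0} := ⟨⟨1, hone⟩⟩
  have hKpos : 0 < K := Nat.card_pos (α := {w : Fin d → F // w ≠ 0})
  have e1 : {p : (Fin d → F) × GL (Fin d) F //
        p.1 ≠ 0 ∧ Matrix.vecMul p.1 (p.2 : Matrix (Fin d) (Fin d) F) = -p.1} ≃
      Σ v : {v : Fin d → F // v ≠ 0},
        {A : GL (Fin d) F // Matrix.vecMul (v : Fin d → F) (A : Matrix (Fin d) (Fin d) F)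
          = -(v : Fin d → F)} :=
    ⟨fun p => ⟨⟨p.1.1, p.2.1⟩, p.1.2, p.2.2⟩, fun s => ⟨(s.1.1, s.2.1), s.1.2, s.2.2⟩,
      fun p => rfl, fun s => rfl⟩
  have hPsum : P = ∑ v : {v : Fin d → F // v ≠ 0},
      Nat.card {A : GL (Fin d) F //
        Matrix.vecMul (v : Fin d → F) (A : Matrix (Fin d) (Fin d) F) = -(v : Fin d → F)} := by
    rw [hP, Nat.card_congr e1, Nat.card_eq_fintype_card, Fintype.card_sigma]
    simp_rw [Nat.card_eq_fintype_card]
  have hPN : P = N := by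
    refine Nat.eq_of_mul_eq_mul_left hKpos ?_
    rw [hPsum, Finset.mul_sum]
    rw [Finset.sum_congr rfl (fun v _ => (aux8_card_gl_eq v.2).symm)]
    rw [Finset.sum_const, smul_eq_mul, Finset.card_univ, ← Nat.card_eq_fintype_card, ← hK]
  -- P as sum over A
  have e2 : {p : (Fin d → F) × GL (Fin d) F //
        p.1 ≠ 0 ∧ Matrix.vecMul p.1 (p.2 : Matrix (Fin d) (Fin d) F) = -p.1} ≃
      Σ A : GL (Fin d) F, {v : Fin d → F // v ≠ 0 ∧
        Matrix.vecMul v (A : Matrix (Fin d) (Fin d) F) = -v} :=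
    ⟨fun p => ⟨p.1.2, p.1.1, p.2.1, p.2.2⟩, fun s => ⟨(s.2.1, s.1), s.2.2.1, s.2.2.2⟩,
      fun p => rfl, fun s => rfl⟩
  set m : GL (Fin d) F → ℕ := fun A => Nat.card {v : Fin d → F // v ≠ 0 ∧
      Matrix.vecMul v (A : Matrix (Fin d) (Fin d) F) = -v} with hm
  have hPsum2 : P = ∑ A : GL (Fin d) F, m A := by
    rw [hP, Nat.card_congr e2, Nat.card_eq_fintype_card, Fintype.card_sigma]
    simp_rw [hm, Nat.card_eq_fintype_card]
  -- T
  set T : Finset (GL (Fin d) F) := Finset.univ.filter (fun A => ∃ v : Fin d → F, v ≠ 0 ∧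
      Matrix.vecMul v (A : Matrix (Fin d) (Fin d) F) = -v) with hT
  have hcardT : Nat.card {A : GL (Fin d) F // ∃ v : Fin d → F, v ≠ 0 ∧
      Matrix.vecMul v (A : Matrix (Fin d) (Fin d) F) = -v} = T.card := by
    rw [Nat.card_eq_fintype_card, Fintype.card_subtype]
  have hsumT : ∑ A : GL (Fin d) F, m A = ∑ A ∈ T, m A := by
    refine (Finset.sum_subset (Finset.subset_univ T) ?_).symm
    intro A _ hA
    rw [hT, Finset.mem_filter] at hA
    push_neg at hA
    have : IsEmpty {v : Fin d → F // v ≠ 0 ∧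
        Matrix.vecMul v (A : Matrix (Fin d) (Fin d) F) = -v} := by
      refine ⟨fun x => ?_⟩
      exact (hA (Finset.mem_univ A) x.1 x.2.1) x.2.2
    exact Nat.card_of_isEmpty
  -- -1 matrix
  have hneg1coe : (((-1 : GL (Fin d) F)) : Matrix (Fin d) (Fin d) F) = -1 := by
    simp
  have hvecneg : ∀ v : Fin d → F,
      Matrix.vecMul v (((-1 : GL (Fin d) F)) : Matrix (Fin d) (Fin d) F) = -v := by
    intro v
    rw [hneg1coe, Matrix.vecMul_neg, Matrix.vecMul_one]
  have hmem : (-1 : GL (Fin d) F) ∈ T := by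
    rw [hT, Finset.mem_filter]
    exact ⟨Finset.mem_univ _, 1, hone, hvecneg 1⟩
  have hmneg1 : m (-1) = K := by
    rw [hm, hK]
    refine Nat.card_congr (Equiv.subtypeEquivRight fun v => ?_)
    exact ⟨fun h => h.1, fun h => ⟨h, hvecneg v⟩⟩
  -- lower bound on m for A ∈ T
  have hmlb : ∀ A ∈ T, q - 1 ≤ m A := by
    intro A hA
    rw [hT, Finset.mem_filter] at hA
    obtain ⟨-, v, hv, hvA⟩ := hA
    have hinj : Function.Injective (fun c : Fˣ =>
        (⟨(c : F) • v, smul_ne_zero c.ne_zero hv, by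
          rw [Matrix.smul_vecMul, hvA, smul_neg]⟩ :
        {v' : Fin d → F // v' ≠ 0 ∧
          Matrix.vecMul v' (A : Matrix (Fin d) (Fin d) F) = -v'})) := by
      intro c c' h
      have := congrArg Subtype.val h
      exact Units.ext (smul_left_injective F hv this)
    have := Nat.card_le_card_of_injective _ hinj
    rwa [Nat.card_units, Nat.card_eq_fintype_card, ← hqdef] at this
  -- K value
  have hKval : K = q ^ d - 1 := by
    rw [hK, Nat.card_eq_fintype_card]
    have h0 : Fintype.card {w : Fin d → F // w ≠ 0} =
        Fintype.card (Fin d → F) - Fintype.card {w : Fin d → F // w = 0} :=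
      Fintype.card_subtype_compl _
    rw [h0, Fintype.card_subtype_eq, Fintype.card_fun, Fintype.card_fin, ← hqdef]
  have hKq : q + 1 ≤ K := by
    have h1 : q ^ 2 ≤ q ^ d := Nat.pow_le_pow_right (by omega) hd
    have h2 : q ^ 2 = q * q := sq q
    have h3 : 3 * q ≤ q * q := Nat.mul_le_mul_right q (by omega)
    omega
  -- final chain
  have hchain : K + (T.card - 1) * (q - 1) ≤ N := by
    rw [← hPN, hPsum2, hsumT, ← Finset.add_sum_erase T m hmem, hmneg1]
    have : (T.erase (-1)).card • (q - 1) ≤ ∑ A ∈ T.erase (-1), m A :=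
      Finset.card_nsmul_le_sum _ _ _ (fun A hA => hmlb A (Finset.mem_of_mem_erase hA))
    rw [Finset.card_erase_of_mem hmem, smul_eq_mul] at this
    omega
  rw [hcardT]
  have hTpos : 1 ≤ T.card := Finset.card_pos.mpr ⟨-1, hmem⟩
  have hmul : (q - 1) * T.card = (q - 1) * (T.card - 1) + (q - 1) := by
    conv_lhs => rw [show T.card = (T.card - 1) + 1 from by omega]
    rw [Nat.mul_succ]
  have hcomm : (T.card - 1) * (q - 1) = (q - 1) * (T.card - 1) := Nat.mul_comm _ _
  have h2q : 2 * T.card ≤ (q - 1) * T.card := Nat.mul_le_mul_right _ (by omega)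
  omega
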